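/- Let r ≥ 2 be an integer. An integer n has a double-base representation of length r if and only if at least one of the following four statements holds: (1) n has a doubly primitive double-base representation of length r; (2) 6 divides n + 1 and (n + 1)/6 has a double-base representation of length r − 1; (3) 6 divides n − 1 and (n − 1)/6 has a double-base representation of length r − 1; (4) there is a {2,3}-integer d > 1 dividing n such that n/d has a primitive double-base representation of length r. -/

import Mathlib

/-- A `{2,3}`-integer: a nonzero integer of the form `±2^a·3^b`. -/
def IsTwoThree (k : ℤ) : Prop := ∃ a b : ℕ, k = 2 ^ a * 3 ^ b ∨ k = -(2 ^ a * 3 ^ b)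

/-- `n` has a double-base representation of length `r`. -/
def HasRep (n : ℤ) (r : ℕ) : Prop :=
  ∃ f : Fin r → ℤ, (∀ i, IsTwoThree (f i)) ∧ n = ∑ i, f i

/-- `n` has a primitive double-base representation of length `r`:
the gcd of the summands is `1`. -/
def HasPrimRep (n : ℤ) (r : ℕ) : Prop :=
  ∃ f : Fin r → ℤ, (∀ i, IsTwoThree (f i)) ∧ n = ∑ i, f i ∧
    Finset.univ.gcd f = 1

/-- `n` has a doubly primitive double-base representation of length `r`:
some summand is not divisible by `2` and a different summand is not
divisible by `3`. -/
def HasDoublyPrimRep (n : ℤ) (r : ℕ) : Prop :=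
  ∃ f : Fin r → ℤ, (∀ i, IsTwoThree (f i)) ∧ n = ∑ i, f i ∧
    ∃ i j, i ≠ j ∧ ¬(2 ∣ f i) ∧ ¬(3 ∣ f j)

lemma IsTwoThree.ne_zero {k : ℤ} (h : IsTwoThree k) : k ≠ 0 := by
  obtain ⟨a, b, h | h⟩ := h <;> subst h <;>
    simp only [ne_eq, neg_eq_zero] <;> positivity

lemma IsTwoThree.mul {k l : ℤ} (hk : IsTwoThree k) (hl : IsTwoThree l) :
    IsTwoThree (k * l) := by
  obtain ⟨a, b, hk | hk⟩ := hk <;> obtain ⟨c, d, hl | hl⟩ := hl <;>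
    subst hk <;> subst hl
  · exact ⟨a + c, b + d, Or.inl (by ring)⟩
  · exact ⟨a + c, b + d, Or.inr (by ring)⟩
  · exact ⟨a + c, b + d, Or.inr (by ring)⟩
  · exact ⟨a + c, b + d, Or.inl (by ring)⟩

lemma nat23 : ∀ m : ℕ, 0 < m → ∀ a b : ℕ, m ∣ 2 ^ a * 3 ^ b →
    ∃ c d : ℕ, m = 2 ^ c * 3 ^ d := by
  intro m
  induction m using Nat.strong_induction_on with
  | _ m ih =>
    intro hm a b hdvd
    rcases eq_or_lt_of_le (Nat.succ_le_of_lt hm) with h1 | h1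
    · exact ⟨0, 0, by omega⟩
    · obtain ⟨p, hp, hpm⟩ := Nat.exists_prime_and_dvd (by omega : m ≠ 1)
      have hp23 : p = 2 ∨ p = 3 := by
        rcases (Nat.Prime.dvd_mul hp).mp (hpm.trans hdvd) with h | h
        · exact Or.inl ((Nat.prime_dvd_prime_iff_eq hp Nat.prime_two).mp
            (hp.dvd_of_dvd_pow h))
        · exact Or.inr ((Nat.prime_dvd_prime_iff_eq hp Nat.prime_three).mp
            (hp.dvd_of_dvd_pow h))
      obtain ⟨m', rfl⟩ := hpm
      have hp2 : 2 ≤ p := hp.two_le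
      have hm' : 0 < m' := by
        rcases Nat.eq_zero_or_pos m' with rfl | h
        · simp at hm
        · exact h
      have hlt : m' < p * m' := by nlinarith
      obtain ⟨c, d, hcd⟩ := ih m' hlt hm' a b ((Dvd.intro_left p rfl).trans hdvd)
      rcases hp23 with rfl | rfl
      · exact ⟨c + 1, d, by rw [hcd]; ring⟩
      · exact ⟨c, d + 1, by rw [hcd]; ring⟩

lemma isTwoThree_of_dvd {k d : ℤ} (hk : IsTwoThree k) (hd : d ∣ k) (h0 : d ≠ 0) :
    IsTwoThree d := by
  obtain ⟨a, b, hab⟩ := hk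
  have hnat : d.natAbs ∣ 2 ^ a * 3 ^ b := by
    have h' : d.natAbs ∣ k.natAbs := Int.natAbs_dvd_natAbs.mpr hd
    rcases hab with rfl | rfl <;>
      simpa [Int.natAbs_mul, Int.natAbs_pow] using h'
  obtain ⟨c, e, hce⟩ := nat23 d.natAbs (Int.natAbs_pos.mpr h0) a b hnat
  rcases Int.natAbs_eq d with h | h
  · exact ⟨c, e, Or.inl (by rw [h, hce]; push_cast; ring)⟩
  · exact ⟨c, e, Or.inr (by rw [h, hce]; push_cast; ring)⟩

lemma isTwoThree_unit {k : ℤ} (hk : IsTwoThree k) (h2 : ¬ (2:ℤ) ∣ k)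
    (h3 : ¬ (3:ℤ) ∣ k) : k = 1 ∨ k = -1 := by
  obtain ⟨a, b, hab⟩ := hk
  have ha : a = 0 := by
    by_contra h
    apply h2
    have h2' : (2:ℤ) ∣ 2 ^ a := dvd_pow_self 2 h
    rcases hab with rfl | rfl
    · exact h2'.mul_right _
    · exact ((h2'.mul_right _).neg_right)
  have hb : b = 0 := by
    by_contra h
    apply h3
    have h3' : (3:ℤ) ∣ 3 ^ b := dvd_pow_self 3 h
    rcases hab with rfl | rfl
    · exact h3'.mul_left _
    · exact ((h3'.mul_left _).neg_right)
  subst ha; subst hb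
  rcases hab with rfl | rfl <;> simp

theorem rep_iff (n : ℤ) (r : ℕ) (hr : 2 ≤ r) :
    HasRep n r ↔
      HasDoublyPrimRep n r ∨
      ((6 ∣ n + 1) ∧ HasRep ((n + 1) / 6) (r - 1)) ∨
      ((6 ∣ n - 1) ∧ HasRep ((n - 1) / 6) (r - 1)) ∨
      (∃ d : ℤ, IsTwoThree d ∧ 1 < d ∧ d ∣ n ∧ HasPrimRep (n / d) r) := by
  obtain ⟨s, rfl⟩ : ∃ s, r = s + 1 := ⟨r - 1, by omega⟩
  have hs1 : 1 ≤ s := by omega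
  simp only [Nat.add_sub_cancel]
  constructor
  · rintro ⟨f, hf, hsum⟩
    set g : ℤ := Finset.univ.gcd f with hgdef
    have hg0 : g ≠ 0 := by
      intro h
      exact (hf 0).ne_zero (Finset.gcd_eq_zero_iff.mp h 0 (Finset.mem_univ 0))
    have hgnn : 0 ≤ g := by
      have := Finset.normalize_gcd (s := Finset.univ) (f := f)
      have habs : |g| = g := by rw [Int.abs_eq_normalize]; exact this
      rw [← habs]; exact abs_nonneg g
    by_cases hg1 : g = 1
    · -- primitive representation
      by_cases hdp : ∃ i j, i ≠ j ∧ ¬ (2:ℤ) ∣ f i ∧ ¬ (3:ℤ) ∣ f j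
      · exact Or.inl ⟨f, hf, hsum, hdp⟩
      · push_neg at hdp
        obtain ⟨i0, hi0⟩ : ∃ i, ¬ (2:ℤ) ∣ f i := by
          by_contra h
          push_neg at h
          have : (2:ℤ) ∣ g := Finset.dvd_gcd fun i _ => h i
          rw [hg1] at this; norm_num at this
        obtain ⟨j0, hj0⟩ : ∃ j, ¬ (3:ℤ) ∣ f j := by
          by_contra h
          push_neg at h
          have : (3:ℤ) ∣ g := Finset.dvd_gcd fun i _ => h i
          rw [hg1] at this; norm_num at this
        have hji : j0 = i0 := by
          by_contra h
          exact hj0 (hdp i0 j0 (Ne.symm h) hi0)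
        subst hji
        have h6 : ∀ k, k ≠ j0 → (6:ℤ) ∣ f k := by
          intro k hk
          have h3k : (3:ℤ) ∣ f k ∨ (2:ℤ) ∣ f k → True := fun _ => trivial
          have h2k : (2:ℤ) ∣ f k := by
            by_contra h2k
            exact hj0 (hdp k j0 hk h2k)
          have h3k' : (3:ℤ) ∣ f k := hdp j0 k (Ne.symm hk) hi0
          omega
        have hunit := isTwoThree_unit (hf j0) hi0 hj0
        -- split off index j0
        have hsplit := Fin.sum_univ_succAbove f j0
        set q : Fin s → ℤ := fun k => f (j0.succAbove k) / 6 with hqdef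
        have hq6 : ∀ k, f (j0.succAbove k) = 6 * q k := by
          intro k
          exact (Int.mul_ediv_cancel' (h6 _ (Fin.succAbove_ne j0 k))).symm
        have hqrep : ∀ k, IsTwoThree (q k) := by
          intro k
          refine isTwoThree_of_dvd (hf (j0.succAbove k)) ⟨6, by rw [hq6 k]; ring⟩ ?_
          intro h
          exact (hf (j0.succAbove k)).ne_zero (by rw [hq6 k, h, mul_zero])
        have hn : n = f j0 + 6 * ∑ k, q k := by
          rw [hsum, hsplit, Finset.mul_sum]
          congr 1
          exact Finset.sum_congr rfl fun k _ => hq6 k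
        rcases hunit with h1 | h1
        · refine Or.inr (Or.inr (Or.inl ⟨⟨∑ k, q k, by omega⟩, q, hqrep, ?_⟩))
          have : n - 1 = 6 * ∑ k, q k := by omega
          rw [this, Int.mul_ediv_cancel_left _ (by norm_num)]
        · refine Or.inr (Or.inl ⟨⟨∑ k, q k, by omega⟩, q, hqrep, ?_⟩)
          have : n + 1 = 6 * ∑ k, q k := by omega
          rw [this, Int.mul_ediv_cancel_left _ (by norm_num)]
    · -- gcd > 1
      obtain ⟨h, hh, hhgcd⟩ := Finset.extract_gcd f (Finset.univ_nonempty)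
      have hgd : 1 < g := by
        rcases lt_or_eq_of_le hgnn with h' | h'
        · omega
        · exact absurd h'.symm hg0
      have hg23 : IsTwoThree g := isTwoThree_of_dvd (hf 0)
        (Finset.gcd_dvd (Finset.mem_univ 0)) hg0
      have hdvdn : g ∣ n := by
        rw [hsum]
        exact Finset.dvd_sum fun i _ => Finset.gcd_dvd (Finset.mem_univ i)
      refine Or.inr (Or.inr (Or.inr ⟨g, hg23, hgd, hdvdn, h, ?_, ?_, hhgcd⟩))
      · intro i
        refine isTwoThree_of_dvd (hf i) ⟨g, by rw [hh i (Finset.mem_univ i)]; ring⟩ ?_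
        intro h0
        exact (hf i).ne_zero (by rw [hh i (Finset.mem_univ i), h0, mul_zero])
      · have : n = g * ∑ i, h i := by
          rw [hsum, Finset.mul_sum]
          exact Finset.sum_congr rfl fun i _ => hh i (Finset.mem_univ i)
        rw [this, Int.mul_ediv_cancel_left _ hg0]
  · rintro (⟨f, hf, hsum, _⟩ | ⟨h6, q, hq, hsum⟩ | ⟨h6, q, hq, hsum⟩ | ⟨d, hd23, hd1, hdn, f, hf, hsum, _⟩)
    · exact ⟨f, hf, hsum⟩
    · refine ⟨Fin.cons (-1 : ℤ) (fun k => 6 * q k), ?_, ?_⟩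
      · intro i
        refine Fin.cases ?_ ?_ i
        · exact ⟨0, 0, Or.inr (by norm_num)⟩
        · intro k
          exact IsTwoThree.mul ⟨1, 1, Or.inl (by norm_num)⟩ (hq k)
      · rw [Fin.sum_cons, ← Finset.mul_sum, ← hsum, Int.mul_ediv_cancel' h6]
        ring
    · refine ⟨Fin.cons (1 : ℤ) (fun k => 6 * q k), ?_, ?_⟩
      · intro i
        refine Fin.cases ?_ ?_ i
        · exact ⟨0, 0, Or.inl (by norm_num)⟩
        · intro k
          exact IsTwoThree.mul ⟨1, 1, Or.inl (by norm_num)⟩ (hq k)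
      · rw [Fin.sum_cons, ← Finset.mul_sum, ← hsum, Int.mul_ediv_cancel' h6]
        ring
    · refine ⟨fun i => d * f i, fun i => IsTwoThree.mul hd23 (hf i), ?_⟩
      rw [← Finset.mul_sum, ← hsum, Int.mul_ediv_cancel' hdn]
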